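/- Let φ be a unit vector in ℂ⁴ with det(T(φ)) ≠ 0. Then there exists a 2×2 unitary matrix W such that the vector φ' = cz·(I ⊗ W)·φ satisfies det(T(φ')) = 0, where I is the 2×2 identity matrix. -/

import Mathlib

open Matrix Complex
open scoped ComplexConjugate

noncomputable section

/-- bit of qubit 1 (leftmost) in the index `2a+b`. -/
def bitHi (i : Fin 4) : Fin 2 := ⟨i.val / 2, by have := i.isLt; omega⟩
/-- bit of qubit 0 (rightmost). -/
def bitLo (i : Fin 4) : Fin 2 := ⟨i.val % 2, by omega⟩

/-- Kronecker product `U ⊗ V` acting on `ℂ⁴`, with `|ab⟩` at index `2a+b`. -/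
def kron2 (U V : Matrix (Fin 2) (Fin 2) ℂ) : Matrix (Fin 4) (Fin 4) ℂ :=
  fun i j => U (bitHi i) (bitHi j) * V (bitLo i) (bitLo j)

/-- The controlled-Z gate on two qubits. -/
def czGate : Matrix (Fin 4) (Fin 4) ℂ := diagonal ![1, 1, 1, -1]

/-- The matrix `T(φ)` of a 2-qubit state vector. -/
def Tmat (φ : Fin 4 → ℂ) : Matrix (Fin 2) (Fin 2) ℂ := !![φ 0, φ 1; φ 2, φ 3]

/-- The basis state `|00⟩` in `ℂ⁴`. -/
def e00 : Fin 4 → ℂ := ![1, 0, 0, 0]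

set_option maxHeartbeats 1000000 in
lemma key (φ : Fin 4 → ℂ) (W : Matrix (Fin 2) (Fin 2) ℂ) :
    (Tmat ((czGate * kron2 1 W).mulVec φ)).det =
    -( (W 0 0 * φ 0 + W 0 1 * φ 1) * (W 1 0 * φ 2 + W 1 1 * φ 3)
     + (W 1 0 * φ 0 + W 1 1 * φ 1) * (W 0 0 * φ 2 + W 0 1 * φ 3) ) := by
  simp [Tmat, czGate, kron2, Matrix.mulVec, Matrix.mul_apply,
    Matrix.det_fin_two, Fin.sum_univ_four, Matrix.diagonal, dotProduct,
    Matrix.one_apply,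
    (by decide : bitHi 0 = 0), (by decide : bitHi 1 = 0),
    (by decide : bitHi 2 = 1), (by decide : bitHi 3 = 1),
    (by decide : bitLo 0 = 0), (by decide : bitLo 1 = 1),
    (by decide : bitLo 2 = 0), (by decide : bitLo 3 = 1)]
  ring

/-- if `det T(φ) ≠ 0` there is a unitary `W` such that
`φ' = cz·(I ⊗ W)·φ` satisfies `det T(φ') = 0`. -/
theorem stmt_9 (φ : Fin 4 → ℂ) (hunit : ∑ i, ‖φ i‖ ^ 2 = 1)
    (hdet : (Tmat φ).det ≠ 0) :
    ∃ W ∈ Matrix.unitaryGroup (Fin 2) ℂ,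
      (Tmat ((czGate * kron2 1 W).mulVec φ)).det = 0 := by
  set a := φ 0 with ha
  set b := φ 1 with hb
  set c := φ 2 with hc
  set d := φ 3 with hd
  set A : ℂ := a * d + b * c with hAdef
  by_cases hA : A = 0
  · refine ⟨1, Submonoid.one_mem _, ?_⟩
    rw [key]
    simp only [Matrix.one_apply_eq, Matrix.one_apply_ne (by decide : (0:Fin 2) ≠ 1),
      Matrix.one_apply_ne (by decide : (1:Fin 2) ≠ 0)]
    rw [← ha, ← hb, ← hc, ← hd]
    linear_combination -hA
  · -- choose a phase e with |e| = 1 making C := b*d*e - a*c*conj e a real multiple of A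
    obtain ⟨e, he, hCim⟩ : ∃ e : ℂ, e * conj e = 1 ∧
        ((b * d * e - a * c * conj e) * conj A).im = 0 := by
      set p : ℂ := b * d * conj A with hp
      set q : ℂ := a * c * conj A with hq
      set α : ℝ := p.im - q.im with hα
      set β : ℝ := p.re + q.re with hβ
      set r : ℝ := Real.sqrt (α ^ 2 + β ^ 2) with hr
      by_cases hr0 : r = 0
      · refine ⟨1, by simp, ?_⟩
        have h0 : α ^ 2 + β ^ 2 = 0 := by
          have := Real.sqrt_eq_zero'.mp (by rw [← hr]; exact hr0)
          nlinarith [sq_nonneg α, sq_nonneg β]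
        have hα0 : α = 0 := by nlinarith [sq_nonneg α, sq_nonneg β]
        have : (b * d * 1 - a * c * conj 1) * conj A = p - q := by
          rw [hp, hq]; simp; ring
        rw [this]
        simpa using hα0
      · refine ⟨⟨β / r, -(α / r)⟩, ?_, ?_⟩
        · have hrsq : r ^ 2 = α ^ 2 + β ^ 2 := Real.sq_sqrt (by positivity)
          have : Complex.normSq ⟨β / r, -(α / r)⟩ = 1 := by
            simp [Complex.normSq_mk]
            field_simp
            nlinarith [hrsq]
          rw [Complex.mul_conj, this]; simp
        · have h1 : (b * d * ⟨β / r, -(α / r)⟩ - a * c * conj ⟨β / r, -(α / r)⟩) * conj A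
              = (⟨β / r, -(α / r)⟩ : ℂ) * p - conj (⟨β / r, -(α / r)⟩ : ℂ) * q := by
            rw [hp, hq]; ring
          rw [h1]
          simp [Complex.sub_im, Complex.mul_im, Complex.conj_re, Complex.conj_im]
          field_simp
          ring
    set C : ℂ := b * d * e - a * c * conj e with hCdef
    have hA2 : (0:ℝ) < Complex.normSq A := Complex.normSq_pos.mpr hA
    set t : ℝ := (C * conj A).re / Complex.normSq A with ht
    have hCre : C * conj A = (((C * conj A).re : ℝ) : ℂ) := by
      apply Complex.ext <;> simp [hCim]
    have hCt : C = (t : ℂ) * A := by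
      have hne : ((Complex.normSq A : ℝ) : ℂ) ≠ 0 := by
        exact_mod_cast hA2.ne'
      rw [ht]
      push_cast
      rw [div_mul_eq_mul_div, eq_div_iff hne]
      calc C * ((Complex.normSq A : ℝ) : ℂ) = C * (A * conj A) := by rw [Complex.mul_conj]
        _ = (C * conj A) * A := by ring
        _ = (((C * conj A).re : ℝ) : ℂ) * A := by rw [← hCre]
    -- now the angle θ
    set s2 : ℝ := Real.sqrt (1 + t ^ 2) with hs2
    have hs2pos : 0 < s2 := Real.sqrt_pos.mpr (by positivity)
    have hs2sq : s2 ^ 2 = 1 + t ^ 2 := Real.sq_sqrt (by positivity)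
    set x : ℝ := -t / s2 with hx
    set y : ℝ := 1 / s2 with hy
    have hypos : 0 < y := by rw [hy]; positivity
    have hxy1 : x ^ 2 + y ^ 2 = 1 := by
      rw [hx, hy, div_pow, div_pow, ← add_div, hs2sq]
      field_simp
      ring
    have hxle : x ≤ 1 ∧ -1 ≤ x := by constructor <;> nlinarith [sq_nonneg y, sq_nonneg x]
    set cθ : ℝ := Real.sqrt ((1 + x) / 2) with hcθ
    set sθ : ℝ := Real.sqrt ((1 - x) / 2) with hsθ
    have hc2 : cθ ^ 2 = (1 + x) / 2 := Real.sq_sqrt (by linarith [hxle.2])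
    have hs2' : sθ ^ 2 = (1 - x) / 2 := Real.sq_sqrt (by linarith [hxle.1])
    have hcs : 2 * cθ * sθ = y := by
      have h1 : (2 * cθ * sθ) ^ 2 = y ^ 2 := by
        have : (2 * cθ * sθ) ^ 2 = 4 * (cθ ^ 2) * (sθ ^ 2) := by ring
        rw [this, hc2, hs2']
        linear_combination -hxy1
      have h2 : 0 ≤ 2 * cθ * sθ := by positivity
      calc 2 * cθ * sθ = Real.sqrt ((2 * cθ * sθ) ^ 2) := (Real.sqrt_sq h2).symm
        _ = Real.sqrt (y ^ 2) := by rw [h1]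
        _ = y := Real.sqrt_sq hypos.le
    have hxtyeq : x + t * y = 0 := by
      rw [hx, hy]
      field_simp
      ring
    -- the unitary W
    refine ⟨!![(cθ : ℂ), e * (sθ : ℂ); -conj e * (sθ : ℂ), (cθ : ℂ)], ?_, ?_⟩
    · rw [Matrix.mem_unitaryGroup_iff']
      have hcs1 : ((cθ : ℂ)) ^ 2 + ((sθ : ℂ)) ^ 2 = 1 := by
        have : cθ ^ 2 + sθ ^ 2 = 1 := by rw [hc2, hs2']; ring
        exact_mod_cast this
      ext i j
      fin_cases i <;> fin_cases j <;>
        simp [Matrix.mul_apply, Fin.sum_univ_two, Matrix.conjTranspose_apply,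
          Matrix.one_apply]
      · linear_combination ((sθ:ℂ))^2 * he + hcs1
      · ring
      · ring
      · linear_combination ((sθ:ℂ))^2 * he + hcs1
    · rw [key]
      simp only [Matrix.cons_val', Matrix.cons_val_zero, Matrix.cons_val_one,
        Matrix.head_cons, Matrix.head_fin_const, Matrix.empty_val',
        Matrix.cons_val_fin_one, Matrix.of_apply]
      rw [← ha, ← hb, ← hc, ← hd]
      have hyC : 2 * (cθ : ℂ) * (sθ : ℂ) = ((y : ℝ) : ℂ) := by exact_mod_cast congrArg (Complex.ofReal) hcs
      have hxC : ((cθ : ℂ)) ^ 2 - ((sθ : ℂ)) ^ 2 = ((x : ℝ) : ℂ) := by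
        have h : cθ ^ 2 - sθ ^ 2 = x := by rw [hc2, hs2']; ring
        exact_mod_cast h
      have hxtyC : ((x : ℝ) : ℂ) + ((t : ℝ) : ℂ) * ((y : ℝ) : ℂ) = 0 := by
        exact_mod_cast congrArg (Complex.ofReal) hxtyeq
      have hbr : ((cθ:ℂ) * a + e * (sθ:ℂ) * b) * (-conj e * (sθ:ℂ) * c + (cθ:ℂ) * d)
          + (-conj e * (sθ:ℂ) * a + (cθ:ℂ) * b) * ((cθ:ℂ) * c + e * (sθ:ℂ) * d)
          = (2 * (cθ:ℂ) * (sθ:ℂ)) * C + (((cθ:ℂ))^2 - ((sθ:ℂ))^2) * A := by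
        rw [hCdef, hAdef]
        linear_combination (-(sθ:ℂ)^2 * (a * d + b * c)) * he
      rw [hbr, hCt, hyC, hxC]
      linear_combination - A * hxtyC
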